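/- One-step decrease inequality for stochastic Krasnoselskii–Mann: if x⁺ = (1−λ)x + λ T_ξ x with ξ drawn independently, then for every fixed point p of T, E[‖x⁺ − p‖²] ≤ (1 + 8λ²)‖x − p‖² − λ(1−λ)‖Tx − x‖² + 2λ²σ*². -/

import Mathlib

open MeasureTheory Filter Topology
open scoped RealInnerProductSpace ENNReal BigOperators

/-- One-step decrease inequality for stochastic Krasnoselskii–Mann:
if `x⁺ = (1−λ)x + λ T_ξ x`, then for every fixed point `p` of `T`,
`E[‖x⁺ − p‖²] ≤ (1 + 8λ²)‖x − p‖² − λ(1−λ)‖Tx − x‖² + 2λ²σ*²`. -/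
theorem stmt4_one_step_decrease
    {H : Type*} [NormedAddCommGroup H] [InnerProductSpace ℝ H] [CompleteSpace H]
    {Ω : Type*} [MeasurableSpace Ω] (μ : Measure Ω) [IsProbabilityMeasure μ]
    (Tξ : Ω → H → H) (T : H → H) (σstar : ℝ) (lam : ℝ) (hlam : lam ∈ Set.Ioo (0:ℝ) 1)
    (x p : H) (hp : T p = p)
    (hne : ∀ᵐ ω ∂μ, ∀ u v : H, ‖Tξ ω u - Tξ ω v‖ ≤ ‖u - v‖)
    (hTne : ∀ u v : H, ‖T u - T v‖ ≤ ‖u - v‖)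
    (hint : Integrable (fun ω => Tξ ω x) μ)
    (hTx : T x = ∫ ω, Tξ ω x ∂μ)
    (hvar : ∫⁻ ω, ‖Tξ ω x - T x‖₊ ^ 2 ∂μ
        ≤ ENNReal.ofReal (2 * σstar ^ 2 + 8 * ‖x - p‖ ^ 2)) :
    ∫⁻ ω, ‖((1 - lam) • x + lam • Tξ ω x) - p‖₊ ^ 2 ∂μ
      ≤ ENNReal.ofReal ((1 + 8 * lam ^ 2) * ‖x - p‖ ^ 2
          - lam * (1 - lam) * ‖T x - x‖ ^ 2 + 2 * lam ^ 2 * σstar ^ 2) := by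
  obtain ⟨hl0, hl1⟩ := hlam
  set e : Ω → H := fun ω => Tξ ω x - T x with he
  have hintE : Integrable e μ := hint.sub (integrable_const _)
  have hEe : ∫ ω, e ω ∂μ = 0 := by
    rw [he]
    rw [integral_sub hint (integrable_const _), integral_const, probReal_univ]
    simp [← hTx]
  -- pointwise nnnorm identity
  have hnn : ∀ y : H, ((‖y‖₊ : ℝ≥0∞) ^ 2) = ENNReal.ofReal (‖y‖ ^ 2) := by
    intro y
    rw [ENNReal.ofReal_pow (norm_nonneg y), ofReal_norm, enorm_eq_nnnorm]
  -- integrability of ‖e‖²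
  have hintE2 : Integrable (fun ω => ‖e ω‖ ^ 2) μ := by
    refine ⟨(hintE.aestronglyMeasurable.norm.mul hintE.aestronglyMeasurable.norm).congr ?_, ?_⟩
    · filter_upwards with ω; simp [sq]
    · unfold HasFiniteIntegral
      calc ∫⁻ ω, ‖(‖e ω‖ ^ 2)‖₊ ∂μ = ∫⁻ ω, (‖e ω‖₊ : ℝ≥0∞) ^ 2 ∂μ := by
            refine lintegral_congr fun ω => ?_
            rw [nnnorm_pow, nnnorm_norm]; push_cast; ring
        _ ≤ ENNReal.ofReal (2 * σstar ^ 2 + 8 * ‖x - p‖ ^ 2) := hvar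
        _ < ⊤ := ENNReal.ofReal_lt_top
  set I : ℝ := ∫ ω, ‖e ω‖ ^ 2 ∂μ with hI
  have hI0 : 0 ≤ I := integral_nonneg fun ω => sq_nonneg _
  have hIle : I ≤ 2 * σstar ^ 2 + 8 * ‖x - p‖ ^ 2 := by
    have h1 : ENNReal.ofReal I = ∫⁻ ω, (‖e ω‖₊ : ℝ≥0∞) ^ 2 ∂μ := by
      rw [hI, ofReal_integral_eq_lintegral_ofReal hintE2
        (Filter.Eventually.of_forall fun ω => sq_nonneg _)]
      exact lintegral_congr fun ω => (hnn (e ω)).symm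
    have h2 : ENNReal.ofReal I ≤ ENNReal.ofReal (2 * σstar ^ 2 + 8 * ‖x - p‖ ^ 2) :=
      h1 ▸ hvar
    have hR : (0:ℝ) ≤ 2 * σstar ^ 2 + 8 * ‖x - p‖ ^ 2 := by positivity
    exact (ENNReal.ofReal_le_ofReal_iff hR).mp h2
  set v : H := (1 - lam) • (x - p) + lam • (T x - p) with hv
  have hpt : ∀ ω, ((1 - lam) • x + lam • Tξ ω x) - p = v + lam • e ω := by
    intro ω
    rw [hv, he]
    module
  -- pointwise expansion
  have hexp : ∀ ω, ‖v + lam • e ω‖ ^ 2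
      = ‖v‖ ^ 2 + 2 * lam * ⟪v, e ω⟫ + lam ^ 2 * ‖e ω‖ ^ 2 := by
    intro ω
    rw [@norm_add_sq_real, real_inner_smul_right, norm_smul]
    simp [abs_of_pos hl0]
    ring
  have hintCross : Integrable (fun ω => 2 * lam * ⟪v, e ω⟫) μ :=
    (hintE.const_inner v).const_mul _
  have hintF : Integrable (fun ω => ‖v + lam • e ω‖ ^ 2) μ := by
    have : Integrable (fun ω => ‖v‖ ^ 2 + 2 * lam * ⟪v, e ω⟫ + lam ^ 2 * ‖e ω‖ ^ 2) μ :=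
      ((integrable_const _).add hintCross).add (hintE2.const_mul _)
    exact this.congr (Filter.Eventually.of_forall fun ω => (hexp ω).symm)
  have hIF : ∫ ω, ‖v + lam • e ω‖ ^ 2 ∂μ = ‖v‖ ^ 2 + lam ^ 2 * I := by
    calc ∫ ω, ‖v + lam • e ω‖ ^ 2 ∂μ
        = ∫ ω, (‖v‖ ^ 2 + 2 * lam * ⟪v, e ω⟫ + lam ^ 2 * ‖e ω‖ ^ 2) ∂μ :=
          integral_congr_ae (Filter.Eventually.of_forall fun ω => hexp ω)
      _ = ‖v‖ ^ 2 + lam ^ 2 * I := by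
          have h3 : ∫ ω, (‖v‖ ^ 2 + 2 * lam * ⟪v, e ω⟫ + lam ^ 2 * ‖e ω‖ ^ 2) ∂μ
              = ∫ ω, (‖v‖ ^ 2 + 2 * lam * ⟪v, e ω⟫) ∂μ + ∫ ω, lam ^ 2 * ‖e ω‖ ^ 2 ∂μ :=
            integral_add ((integrable_const _).add hintCross) (hintE2.const_mul _)
          have h4 : ∫ ω, (‖v‖ ^ 2 + 2 * lam * ⟪v, e ω⟫) ∂μ
              = ∫ ω, (‖v‖ ^ 2 : ℝ) ∂μ + ∫ ω, 2 * lam * ⟪v, e ω⟫ ∂μ :=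
            integral_add (integrable_const _) hintCross
          rw [h3, h4, integral_const, probReal_univ, integral_const_mul, integral_const_mul,
            integral_inner hintE, hEe, inner_zero_right]
          simp [hI]
  -- bound on ‖v‖²
  have hvle : ‖v‖ ^ 2 ≤ ‖x - p‖ ^ 2 - lam * (1 - lam) * ‖T x - x‖ ^ 2 := by
    have hb : ‖T x - p‖ ≤ ‖x - p‖ := by
      have := hTne x p; rwa [hp] at this
    have h1 : ‖v‖ ^ 2 = (1 - lam) ^ 2 * ‖x - p‖ ^ 2
        + 2 * ((1 - lam) * lam) * ⟪x - p, T x - p⟫ + lam ^ 2 * ‖T x - p‖ ^ 2 := by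
      rw [hv, @norm_add_sq_real, norm_smul, norm_smul, real_inner_smul_left,
        real_inner_smul_right]
      rw [Real.norm_eq_abs, Real.norm_eq_abs, abs_of_pos hl0,
        abs_of_pos (by linarith : (0:ℝ) < 1 - lam)]
      ring
    have h2 : ‖T x - x‖ ^ 2 = ‖x - p‖ ^ 2 - 2 * ⟪x - p, T x - p⟫ + ‖T x - p‖ ^ 2 := by
      have : T x - x = (T x - p) - (x - p) := by abel
      rw [this, @norm_sub_sq_real, real_inner_comm]
      ring
    have hb2 : ‖T x - p‖ ^ 2 ≤ ‖x - p‖ ^ 2 := by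
      nlinarith [norm_nonneg (T x - p), norm_nonneg (x - p)]
    nlinarith [sq_nonneg (1 - lam), mul_pos hl0 (by linarith : (0:ℝ) < 1 - lam)]
  -- final
  calc ∫⁻ ω, ‖((1 - lam) • x + lam • Tξ ω x) - p‖₊ ^ 2 ∂μ
      = ∫⁻ ω, ENNReal.ofReal (‖v + lam • e ω‖ ^ 2) ∂μ := by
        refine lintegral_congr fun ω => ?_
        rw [hpt ω, hnn]
    _ = ENNReal.ofReal (∫ ω, ‖v + lam • e ω‖ ^ 2 ∂μ) :=
        (ofReal_integral_eq_lintegral_ofReal hintF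
          (Filter.Eventually.of_forall fun ω => sq_nonneg _)).symm
    _ ≤ ENNReal.ofReal ((1 + 8 * lam ^ 2) * ‖x - p‖ ^ 2
          - lam * (1 - lam) * ‖T x - x‖ ^ 2 + 2 * lam ^ 2 * σstar ^ 2) := by
        apply ENNReal.ofReal_le_ofReal
        rw [hIF]
        nlinarith [sq_nonneg lam, mul_le_mul_of_nonneg_left hIle (sq_nonneg lam)]
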